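/- For every μ ∈ ℂ, the symmetric invariant bilinear form B on the toroidal extended affine Lie algebra g_div(μ) = (R⊗ġ) ⊕ K ⊕ D_div is non-degenerate: for every nonzero x ∈ g_div(μ) there exists y ∈ g_div(μ) with B(x,y) ≠ 0. -/
import Mathlib


noncomputable section

/-- Index set `{0, 1, ..., N}` for the variables of the torus. -/
abbrev TorIdx (N : ℕ) := Fin (N + 1)

/-- Laurent polynomials `ℂ[t₀^{±1}, ..., t_N^{±1}]`, realized as finitely supported
functions on the lattice `ℤ^{N+1}` of exponents (Fourier basis). -/
abbrev TorR (N : ℕ) := (TorIdx N → ℤ) →₀ ℂ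

/-- The monomial `t^r = t₀^{r₀} ⋯ t_N^{r_N}`. -/
def tpow {N : ℕ} (r : TorIdx N → ℤ) : TorR N := Finsupp.single r 1

/-- Multiplication of Laurent polynomials. -/
def rmul {N : ℕ} (f g : TorR N) : TorR N :=
  f.sum fun r a => g.sum fun m b => Finsupp.single (r + m) (a * b)

/-- The derivation `d_p = t_p ∂/∂t_p`, acting on monomials by `d_p (t^r) = r_p t^r`. -/
def dOp {N : ℕ} (p : TorIdx N) : TorR N →ₗ[ℂ] TorR N :=
  Finsupp.lsum ℂ fun r => (r p : ℂ) • Finsupp.lsingle r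

/-- The space `Ω_R` of 1-forms on the torus: the free `R`-module with basis `k₀, ..., k_N`,
a 1-form `Σ_p f_p k_p` being recorded as the tuple of coefficients `(f_p)`. -/
abbrev TorOmega (N : ℕ) := TorIdx N → TorR N

/-- The map `d : R → Ω_R`, `d f = Σ_p t_p (∂f/∂t_p) k_p`. -/
def dFull (N : ℕ) : TorR N →ₗ[ℂ] TorOmega N := LinearMap.pi fun p => dOp p

/-- The space `K = Ω_R / d(R)`. -/
abbrev TorK (N : ℕ) := TorOmega N ⧸ LinearMap.range (dFull N)

/-- The canonical projection `Ω_R → K`. -/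
def kcl {N : ℕ} (ω : TorOmega N) : TorK N := Submodule.Quotient.mk ω

/-- The multi-loop space `R ⊗ ġ`, realized as finitely supported functions
`ℤ^{N+1} →₀ ġ`; the element `t^r ⊗ x` is `Finsupp.single r x`. -/
abbrev TorLoop (N : ℕ) (g : Type*) [AddCommGroup g] [Module ℂ g] := (TorIdx N → ℤ) →₀ g

/-- The Lie algebra `D = ⊕_p R d_p` of vector fields on the torus; the vector field
`Σ_p f_p d_p` is recorded as the tuple of coefficients `(f_p)`. -/
abbrev TorD (N : ℕ) := TorIdx N → TorR N

/-- The divergence `Σ_p t_p ∂f_p/∂t_p` of a vector field `Σ_p f_p d_p`. -/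
def divMap (N : ℕ) : TorD N →ₗ[ℂ] TorR N := ∑ p, (dOp p).comp (LinearMap.proj p)

/-- The Kassel bracket on `(R ⊗ ġ) ⊕ K`:
`[f₁ ⊗ g₁, f₂ ⊗ g₂] = f₁f₂ ⊗ [g₁,g₂] + (g₁|g₂)·(class of f₂ d(f₁))`, with `K` central. -/
def kassel {N : ℕ} {g : Type*} [LieRing g] [LieAlgebra ℂ g]
    (B : LinearMap.BilinForm ℂ g) (x y : TorLoop N g × TorK N) :
    TorLoop N g × TorK N :=
  x.1.sum fun r a => y.1.sum fun m b =>
    (Finsupp.single (r + m) ⁅a, b⁆, B a b • kcl fun p => (r p : ℂ) • tpow (r + m))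

/-- The underlying space of the full toroidal Lie algebra `g(μ) = (R ⊗ ġ) ⊕ K ⊕ D`. -/
abbrev TorG (N : ℕ) (g : Type*) [AddCommGroup g] [Module ℂ g] :=
  TorLoop N g × TorK N × TorD N

section Generators

variable {N : ℕ} {g : Type*} [LieRing g] [LieAlgebra ℂ g]

/-- The element `t^r ⊗ x` of `(R ⊗ ġ) ⊕ K ⊕ D`. -/
def G1 (r : TorIdx N → ℤ) (x : g) : TorG N g := (Finsupp.single r x, 0, 0)

/-- The element of `(R ⊗ ġ) ⊕ K ⊕ D` given by the class of a 1-form `ω` in `K`. -/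
def GK (ω : TorOmega N) : TorG N g := (0, kcl ω, 0)

/-- The element `t^r d_a` of `(R ⊗ ġ) ⊕ K ⊕ D`. -/
def G3 (r : TorIdx N → ℤ) (a : TorIdx N) : TorG N g := (0, 0, Pi.single a (tpow r))

end Generators

/-- The defining properties of the bracket of the full toroidal Lie algebra `g(μ)`:
bilinearity, the structure formulas
`[f₁⊗g₁, f₂⊗g₂] = f₁f₂⊗[g₁,g₂] + (g₁|g₂) f₂ d(f₁)`, `K` central in `(R⊗ġ)⊕K`,
`[t^r d_a, t^m⊗g] = m_a t^{r+m}⊗g`,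
`[t^r d_a, t^m k_b] = m_a t^{r+m} k_b + δ_{ab} Σ_p r_p t^{r+m} k_p`,
`[t^r d_a, t^m d_b] = m_a t^{r+m} d_b − r_b t^{r+m} d_a + μ m_a r_b Σ_p m_p t^{r+m} k_p`,
together with the bracket being alternating and satisfying the Jacobi identity. -/
def IsToroidalBracket {N : ℕ} {g : Type*} [LieRing g] [LieAlgebra ℂ g]
    (B : LinearMap.BilinForm ℂ g) (μ : ℂ)
    (br : TorG N g → TorG N g → TorG N g) : Prop :=
  -- bilinearity
  (∀ y : TorG N g, IsLinearMap ℂ fun x => br x y) ∧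
  (∀ x : TorG N g, IsLinearMap ℂ fun y => br x y) ∧
  -- alternating
  (∀ x : TorG N g, br x x = 0) ∧
  -- Jacobi identity
  (∀ x y z : TorG N g, br (br x y) z + br (br y z) x + br (br z x) y = 0) ∧
  -- `[t^r ⊗ x, t^m ⊗ y] = t^{r+m} ⊗ [x,y] + (x|y)·(class of t^m d(t^r))`
  (∀ (r m : TorIdx N → ℤ) (x y : g),
    br (G1 r x) (G1 m y)
      = (Finsupp.single (r + m) ⁅x, y⁆,
          B x y • kcl fun p => (r p : ℂ) • tpow (r + m), 0)) ∧
  -- `K` is central in `(R ⊗ ġ) ⊕ K`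
  (∀ (r : TorIdx N → ℤ) (x : g) (ω : TorOmega N),
    br (G1 r x) (GK ω) = 0 ∧ br (GK ω) (G1 r x) = 0) ∧
  (∀ ω ω' : TorOmega N, br (GK ω) (GK ω') = 0) ∧
  -- `[t^r d_a, t^m ⊗ y] = m_a t^{r+m} ⊗ y`
  (∀ (r : TorIdx N → ℤ) (a : TorIdx N) (m : TorIdx N → ℤ) (y : g),
    br (G3 r a) (G1 m y) = ((m a : ℂ) • Finsupp.single (r + m) y, 0, 0)) ∧
  -- `[t^r d_a, t^m k_b] = m_a t^{r+m} k_b + δ_{ab} Σ_p r_p t^{r+m} k_p`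
  (∀ (r : TorIdx N → ℤ) (a : TorIdx N) (m : TorIdx N → ℤ) (b : TorIdx N),
    br (G3 r a) (GK (Pi.single b (tpow m)))
      = (0, (m a : ℂ) • kcl (Pi.single b (tpow (r + m)))
          + (if a = b then kcl fun p => (r p : ℂ) • tpow (r + m) else 0), 0)) ∧
  -- `[t^r d_a, t^m d_b] = m_a t^{r+m} d_b − r_b t^{r+m} d_a + μ m_a r_b Σ_p m_p t^{r+m} k_p`
  (∀ (r : TorIdx N → ℤ) (a : TorIdx N) (m : TorIdx N → ℤ) (b : TorIdx N),
    br (G3 r a) (G3 m b)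
      = (0, (μ * (m a : ℂ) * (r b : ℂ)) • kcl fun p => (m p : ℂ) • tpow (r + m),
          (m a : ℂ) • (Pi.single b (tpow (r + m)) : TorD N)
            - (r b : ℂ) • (Pi.single a (tpow (r + m)) : TorD N)))


/-- The defining properties of the invariant bilinear form `B` on the toroidal extended
affine Lie algebra `g_div(μ) = (R⊗ġ) ⊕ K ⊕ D_div`: it is bilinear,
`B(t^r⊗g₁, t^m⊗g₂) = δ_{r,−m}(g₁|g₂)`,
`B(Σ_p a_p t^r d_p, t^m k_q) = δ_{r,−m} a_q = B(t^m k_q, Σ_p a_p t^r d_p)` for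
divergence-zero vector fields, and it vanishes on `(R⊗ġ) × (K ⊕ D_div)`,
on `D_div × D_div` and on `K × K`. -/
def IsToroidalForm {N : ℕ} {g : Type*} [LieRing g] [LieAlgebra ℂ g]
    (B : LinearMap.BilinForm ℂ g) (Bf : TorG N g → TorG N g → ℂ) : Prop :=
  -- bilinearity
  (∀ y : TorG N g, IsLinearMap ℂ fun x => Bf x y) ∧
  (∀ x : TorG N g, IsLinearMap ℂ fun y => Bf x y) ∧
  -- `(t^r ⊗ g₁ | t^m ⊗ g₂) = δ_{r,−m} (g₁|g₂)`
  (∀ (r m : TorIdx N → ℤ) (x y : g),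
    Bf (G1 r x) (G1 m y) = if r + m = 0 then B x y else 0) ∧
  -- `(Σ_p a_p t^r d_p | t^m k_q) = δ_{r,−m} a_q`, both ways, for divergence-zero fields
  (∀ (a : TorIdx N → ℂ) (r : TorIdx N → ℤ), (∑ p, a p * (r p : ℂ)) = 0 →
    ∀ (m : TorIdx N → ℤ) (q : TorIdx N),
      Bf (0, 0, fun p => a p • tpow r) (GK (Pi.single q (tpow m)))
        = (if r + m = 0 then a q else 0) ∧
      Bf (GK (Pi.single q (tpow m))) (0, 0, fun p => a p • tpow r)
        = (if r + m = 0 then a q else 0)) ∧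
  -- `(R ⊗ ġ | K ⊕ D_div) = 0`
  (∀ (u : TorLoop N g) (k : TorK N) (X : TorD N), divMap N X = 0 →
    Bf (u, 0, 0) (0, k, X) = 0 ∧ Bf (0, k, X) (u, 0, 0) = 0) ∧
  -- `(D_div | D_div) = 0`
  (∀ X Y : TorD N, divMap N X = 0 → divMap N Y = 0 →
    Bf (0, 0, X) (0, 0, Y) = 0) ∧
  -- `(K | K) = 0`
  (∀ k k' : TorK N, Bf (0, k, 0) (0, k', 0) = 0)

lemma finsupp_eq_sum_single_subset {α M : Type*} [AddCommMonoid M] (f : α →₀ M)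
    (S : Finset α) (hS : f.support ⊆ S) :
    ∑ s ∈ S, Finsupp.single s (f s) = f := by
  rw [← Finset.sum_subset hS (fun s _ hs => by
    simp [Finsupp.notMem_support_iff.mp hs])]
  exact f.sum_single

lemma dOp_apply {N : ℕ} (p : TorIdx N) (f : TorR N) (s : TorIdx N → ℤ) :
    (dOp p f) s = (s p : ℂ) * f s := by
  classical
  simp only [dOp, Finsupp.lsum_apply, LinearMap.smul_apply, Finsupp.lsingle_apply]
  rw [Finsupp.sum_apply]
  simp only [Finsupp.sum, LinearMap.smul_apply, Finsupp.lsingle_apply,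
    Finsupp.smul_apply, Finsupp.single_apply, smul_eq_mul, mul_ite, mul_zero]
  rw [Finset.sum_ite_eq' f.support s (fun r => (r p : ℂ) * f r)]
  by_cases hs : s ∈ f.support
  · simp [hs]
  · simp [hs, Finsupp.notMem_support_iff.mp hs]

lemma divMap_apply {N : ℕ} (X : TorD N) (s : TorIdx N → ℤ) :
    (divMap N X) s = ∑ p, (s p : ℂ) * X p s := by
  simp [divMap, LinearMap.sum_apply, Finsupp.finset_sum_apply, dOp_apply]

lemma perp_lemma {n : ℕ} (s : Fin n → ℤ) (c : Fin n → ℂ)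
    (h : ∀ a : Fin n → ℂ, (∑ p, a p * (s p : ℂ)) = 0 → (∑ q, c q * a q) = 0) :
    ∃ lam : ℂ, ∀ q, c q = lam * (s q : ℂ) := by
  by_cases hs : ∀ p, s p = 0
  · refine ⟨0, fun q => ?_⟩
    have := h (Pi.single q 1) (by simp [hs])
    simpa [Pi.single_apply, mul_ite, Finset.sum_ite_eq'] using this
  · push_neg at hs
    obtain ⟨q₀, hq₀⟩ := hs
    have hq₀' : (s q₀ : ℂ) ≠ 0 := Int.cast_ne_zero.mpr hq₀
    refine ⟨c q₀ / s q₀, fun q => ?_⟩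
    set a : Fin n → ℂ := fun p =>
      (if p = q then (s q₀ : ℂ) else 0) - (if p = q₀ then (s q : ℂ) else 0) with ha
    have e1 : ∀ d : Fin n → ℂ, (∑ p, d p * a p) = d q * s q₀ - d q₀ * s q := by
      intro d
      simp [ha, mul_sub, Finset.sum_sub_distrib, mul_ite, mul_zero,
        Finset.sum_ite_eq']
    have key := h a (by
      have : (∑ p, a p * (s p : ℂ)) = ∑ p, (fun p => (s p : ℂ)) p * a p := by
        rw [Finset.sum_congr rfl]; intro p _; ring
      rw [this, e1]; ring)
    rw [e1 c] at key
    field_simp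
    linear_combination key

lemma smul_tpow {N : ℕ} (c : ℂ) (s : TorIdx N → ℤ) :
    c • tpow s = Finsupp.single s c := by
  simp [tpow, Finsupp.smul_single]

lemma dOp_tpow {N : ℕ} (p : TorIdx N) (s : TorIdx N → ℤ) :
    dOp p (tpow s) = (s p : ℂ) • tpow s := by
  ext m
  rw [dOp_apply]
  simp only [tpow, Finsupp.smul_apply, Finsupp.single_apply, smul_eq_mul]
  by_cases h : s = m
  · subst h; simp
  · simp [h]

lemma divMap_field {N : ℕ} (a : TorIdx N → ℂ) (m : TorIdx N → ℤ)
    (h : (∑ p, a p * (m p : ℂ)) = 0) :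
    divMap N (fun p => a p • tpow m) = 0 := by
  ext s
  rw [divMap_apply]
  simp only [Finsupp.coe_zero, Pi.zero_apply]
  by_cases hm : m = s
  · subst hm
    simp only [Finsupp.smul_apply, tpow, Finsupp.single_apply, if_pos rfl,
      smul_eq_mul, mul_one, if_true, eq_self_iff_true]
    calc (∑ p, (m p : ℂ) * a p) = ∑ p, a p * (m p : ℂ) := by
          exact Finset.sum_congr rfl fun p _ => mul_comm _ _
      _ = 0 := h
  · simp [tpow, Finsupp.single_apply, hm]

lemma islin_sum {M : Type*} [AddCommGroup M] [Module ℂ M] {f : M → ℂ}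
    (hf : IsLinearMap ℂ f) {ι : Type*} (t : Finset ι) (F : ι → M) :
    f (∑ i ∈ t, F i) = ∑ i ∈ t, f (F i) :=
  map_sum (IsLinearMap.mk' f hf) F t

/-- `GK` as a linear map. -/
def GKL (N : ℕ) (g : Type*) [LieRing g] [LieAlgebra ℂ g] :
    TorOmega N →ₗ[ℂ] TorG N g :=
  LinearMap.prod 0 (LinearMap.prod (LinearMap.range (dFull N)).mkQ 0)

lemma GKL_apply {N : ℕ} {g : Type*} [LieRing g] [LieAlgebra ℂ g] (ω : TorOmega N) :
    GKL N g ω = GK ω := rfl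

lemma omega_decomp {N : ℕ} (ω : TorOmega N) (T : Finset (TorIdx N → ℤ))
    (hT : ∀ q, (ω q).support ⊆ T) :
    ω = ∑ s ∈ T, ∑ q, (ω q s) • (Pi.single q (tpow s) : TorOmega N) := by
  funext p
  simp only [Finset.sum_apply, Pi.smul_apply, Pi.single_apply, smul_ite, smul_zero]
  rw [Finset.sum_congr rfl (fun s _ =>
    Finset.sum_ite_eq Finset.univ p (fun q => (ω q s) • tpow s))]
  simp only [Finset.mem_univ, if_pos, smul_tpow]
  exact (finsupp_eq_sum_single_subset (ω p) T (hT p)).symm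

lemma field_decomp {N : ℕ} (X : TorD N) (S : Finset (TorIdx N → ℤ))
    (hS : ∀ p, (X p).support ⊆ S) :
    X = ∑ s ∈ S, (fun p => (X p s) • tpow s) := by
  funext p
  simp only [Finset.sum_apply, smul_tpow]
  exact (finsupp_eq_sum_single_subset (X p) S (hS p)).symm

lemma islin_smul {M : Type*} [AddCommGroup M] [Module ℂ M] {f : M → ℂ}
    (hf : IsLinearMap ℂ f) (c : ℂ) (x : M) : f (c • x) = c * f x :=
  hf.map_smul c x

/-- For every `μ ∈ ℂ`, the symmetric invariant bilinear form `B` on the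
toroidal extended affine Lie algebra `g_div(μ) = (R⊗ġ) ⊕ K ⊕ D_div` is non-degenerate:
for every nonzero `x ∈ g_div(μ)` there exists `y ∈ g_div(μ)` with `B(x,y) ≠ 0`. -/
theorem statement7 (N : ℕ) (hN : 1 ≤ N) (g : Type*) [LieRing g] [LieAlgebra ℂ g]
    [FiniteDimensional ℂ g] [LieAlgebra.IsSimple ℂ g]
    (B : LinearMap.BilinForm ℂ g)
    (hsymm : ∀ x y : g, B x y = B y x)
    (hinv : ∀ x y z : g, B ⁅x, y⁆ z = B x ⁅y, z⁆)
    (hnd : ∀ x : g, x ≠ 0 → ∃ y : g, B x y ≠ 0)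
    (μ : ℂ) (Bf : TorG N g → TorG N g → ℂ)
    (hBf : IsToroidalForm B Bf) :
    ∀ x : TorG N g, divMap N x.2.2 = 0 → x ≠ 0 →
      ∃ y : TorG N g, divMap N y.2.2 = 0 ∧ Bf x y ≠ 0 := by
  classical
  obtain ⟨hl, hr, hG1, hDK, hRK, hDD, hKK⟩ := hBf
  rintro ⟨u, k, X⟩ hdiv hx
  simp only at hdiv
  by_cases hu : u = 0
  · subst hu
    by_cases hX : X = 0
    · -- K case
      subst hX
      have hk : k ≠ 0 := fun h => hx (by simp [h])
      obtain ⟨ω, rfl⟩ := Submodule.Quotient.mk_surjective (LinearMap.range (dFull N)) k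
      by_contra hcon
      push_neg at hcon
      set T : Finset (TorIdx N → ℤ) := Finset.univ.biUnion (fun q => (ω q).support)
        with hTdef
      have hT : ∀ q, (ω q).support ⊆ T := fun q s hs =>
        Finset.mem_biUnion.mpr ⟨q, Finset.mem_univ _, hs⟩
      have hdecomp : ((0, Submodule.Quotient.mk ω, 0) : TorG N g)
          = ∑ s ∈ T, ∑ q, (ω q s) • GK (Pi.single q (tpow s)) := by
        calc ((0, Submodule.Quotient.mk ω, 0) : TorG N g) = GKL N g ω := rfl
          _ = GKL N g (∑ s ∈ T, ∑ q, (ω q s) • (Pi.single q (tpow s) : TorOmega N)) := by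
              rw [← omega_decomp ω T hT]
          _ = ∑ s ∈ T, ∑ q, (ω q s) • GK (Pi.single q (tpow s)) := by
              rw [map_sum]
              refine Finset.sum_congr rfl fun s _ => ?_
              rw [map_sum]
              exact Finset.sum_congr rfl fun q _ => map_smul _ _ _
      have key : ∀ s0 : TorIdx N → ℤ, ∀ a : TorIdx N → ℂ,
          (∑ p, a p * (s0 p : ℂ)) = 0 → (∑ q, (ω q s0) * a q) = 0 := by
        intro s0 a ha
        have hdm : (∑ p, a p * ((-s0) p : ℂ)) = 0 := by
          have h2 : (∑ p, a p * ((-s0) p : ℂ)) = -∑ p, a p * (s0 p : ℂ) := by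
            rw [← Finset.sum_neg_distrib]
            refine Finset.sum_congr rfl fun p _ => ?_
            rw [Pi.neg_apply]
            push_cast
            ring
          rw [h2, ha, neg_zero]
        have hz := hcon ((0, 0, fun p => a p • tpow (-s0)) : TorG N g)
          (divMap_field a (-s0) hdm)
        rw [hdecomp, islin_sum (hl _)] at hz
        have hGKy : ∀ (s : TorIdx N → ℤ) (q : TorIdx N),
            Bf (GK (Pi.single q (tpow s))) ((0, 0, fun p => a p • tpow (-s0)) : TorG N g)
            = (if s = s0 then a q else 0) := by
          intro s q
          rw [(hDK a (-s0) hdm s q).2]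
          by_cases hss : s = s0
          · rw [if_pos hss, if_pos (by rw [hss]; exact neg_add_cancel s0)]
          · rw [if_neg hss, if_neg (fun hc => hss (by rwa [neg_add_eq_zero, eq_comm] at hc))]
        have hq2 : ∀ (s : TorIdx N → ℤ) (q : TorIdx N),
            Bf ((ω q s) • GK (Pi.single q (tpow s)))
              ((0, 0, fun p => a p • tpow (-s0)) : TorG N g)
            = (ω q s) * (if s = s0 then a q else 0) := by
          intro s q
          rw [islin_smul (hl _), hGKy s q]
        have hz2 : (∑ s ∈ T, if s = s0 then (∑ q, (ω q s) * a q) else 0) = 0 := by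
          have e : (∑ s ∈ T, if s = s0 then (∑ q, (ω q s) * a q) else 0)
              = ∑ s ∈ T, Bf (∑ q, (ω q s) • GK (Pi.single q (tpow s)))
                  ((0, 0, fun p => a p • tpow (-s0)) : TorG N g) := by
            refine Finset.sum_congr rfl fun s _ => ?_
            rw [islin_sum (hl _), Finset.sum_congr rfl fun q _ => hq2 s q]
            by_cases hss : s = s0 <;> simp [hss]
          rw [e]
          exact hz
        by_cases hsT : s0 ∈ T
        · rw [Finset.sum_ite_eq' T s0 (fun s => ∑ q, (ω q s) * a q), if_pos hsT] at hz2
          exact hz2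
        · have hzero : ∀ q, ω q s0 = 0 := fun q =>
            Finsupp.notMem_support_iff.mp (fun hc => hsT (hT q hc))
          simp [hzero]
      choose lam hlam using fun s0 => perp_lemma s0 (fun q => ω q s0) (key s0)
      have hrange : dFull N (∑ s ∈ T, lam s • tpow s) = ω := by
        funext p
        have hp : dFull N (∑ s ∈ T, lam s • tpow s) p
            = dOp p (∑ s ∈ T, lam s • tpow s) := rfl
        rw [hp, map_sum]
        calc (∑ s ∈ T, dOp p (lam s • tpow s))
            = ∑ s ∈ T, Finsupp.single s (ω p s) := by
              refine Finset.sum_congr rfl fun s _ => ?_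
              rw [map_smul, dOp_tpow, smul_smul, ← hlam s p, smul_tpow]
          _ = ω p := finsupp_eq_sum_single_subset (ω p) T (hT p)
      exact hk ((Submodule.Quotient.mk_eq_zero _).mpr (LinearMap.mem_range.mpr ⟨_, hrange⟩))
    · -- D case
      obtain ⟨q, hq⟩ : ∃ q, X q ≠ 0 := by
        by_contra h; push_neg at h; exact hX (funext h)
      obtain ⟨r, hrne⟩ : ∃ r, X q r ≠ 0 := by
        by_contra h; push_neg at h
        exact hq (Finsupp.ext fun a => by simpa using h a)
      refine ⟨GK (Pi.single q (tpow (-r))), map_zero _, ?_⟩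
      set S : Finset (TorIdx N → ℤ) := Finset.univ.biUnion (fun p => (X p).support)
        with hSdef
      have hS : ∀ p, (X p).support ⊆ S := fun p s hs =>
        Finset.mem_biUnion.mpr ⟨p, Finset.mem_univ _, hs⟩
      have hsum : (∑ s ∈ S, ((0, 0, fun p => (X p s) • tpow s) : TorG N g))
          = ((0, 0, X) : TorG N g) := by
        rw [Prod.ext_iff]
        constructor
        · simp [Prod.fst_sum]
        · rw [Prod.ext_iff]
          constructor
          · simp [Prod.snd_sum, Prod.fst_sum]
          · simp only [Prod.snd_sum]
            exact (field_decomp X S hS).symm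
      have hsplit : ((0, k, X) : TorG N g)
          = (0, k, 0) + ∑ s ∈ S, ((0, 0, fun p => (X p s) • tpow s) : TorG N g) := by
        rw [hsum]; simp [Prod.ext_iff]
      rw [hsplit, (hl _).map_add, islin_sum (hl _)]
      have hz1 : Bf (0, k, 0) (GK (Pi.single q (tpow (-r)))) = 0 :=
        hKK k (kcl (Pi.single q (tpow (-r))))
      have hterm : ∀ s ∈ S,
          Bf ((0, 0, fun p => (X p s) • tpow s) : TorG N g)
            (GK (Pi.single q (tpow (-r))))
          = (if s = r then X q s else 0) := by
        intro s _
        have hds : (∑ p, (X p s) * (s p : ℂ)) = 0 := by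
          have := congrFun (congrArg (DFunLike.coe) hdiv) s
          rw [divMap_apply] at this
          simp only [Finsupp.coe_zero, Pi.zero_apply] at this
          calc (∑ p, (X p s) * (s p : ℂ)) = ∑ p, (s p : ℂ) * X p s :=
                Finset.sum_congr rfl fun p _ => mul_comm _ _
            _ = 0 := this
        rw [(hDK (fun p => X p s) s hds (-r) q).1]
        simp only [add_neg_eq_zero]
      rw [Finset.sum_congr rfl hterm, Finset.sum_ite_eq' S r (fun s => X q s),
        if_pos (hS q (Finsupp.mem_support_iff.mpr hrne))]
      simpa [hz1] using hrne
  · -- loop case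
    obtain ⟨r, hru⟩ : ∃ r, u r ≠ 0 := by
      by_contra h; push_neg at h
      exact hu (Finsupp.ext fun a => by simpa using h a)
    obtain ⟨v, hv⟩ := hnd (u r) hru
    refine ⟨G1 (-r) v, map_zero _, ?_⟩
    have hsum : (∑ s ∈ u.support, G1 s (u s)) = ((u, 0, 0) : TorG N g) := by
      rw [Prod.ext_iff]
      constructor
      · simp only [Prod.fst_sum]
        exact finsupp_eq_sum_single_subset u u.support subset_rfl
      · rw [Prod.ext_iff]
        constructor <;> simp [Prod.snd_sum, Prod.fst_sum, G1]
    have hsplit : ((u, k, X) : TorG N g)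
        = (∑ s ∈ u.support, G1 s (u s)) + (0, k, X) := by
      rw [hsum]; simp [Prod.ext_iff]
    rw [hsplit, (hl _).map_add, islin_sum (hl _)]
    have hz2 : Bf ((0, k, X) : TorG N g) (G1 (-r) v) = 0 :=
      (hRK (Finsupp.single (-r) v) k X hdiv).2
    have hterm : ∀ s ∈ u.support,
        Bf (G1 s (u s)) (G1 (-r) v) = (if s = r then B (u s) v else 0) := by
      intro s _
      rw [hG1 s (-r) (u s) v]
      simp only [add_neg_eq_zero]
    rw [Finset.sum_congr rfl hterm, Finset.sum_ite_eq' u.support r (fun s => B (u s) v),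
      if_pos (Finsupp.mem_support_iff.mpr hru)]
    simpa [hz2] using hv
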